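/- Let A and B be unbounded self-adjoint operators on a Hilbert space such that AB = BA (as an equality of unbounded operators, including domains) and σ(AB) ≠ ℂ. Then A and B strongly commute (their spectral projections commute). -/

import Mathlib

open LinearPMap

set_option linter.unusedSectionVars false

noncomputable section

section BanachDefs

variable {H : Type*} [NormedAddCommGroup H] [NormedSpace ℂ H]

/-- Composition `g ∘ f` of unbounded operators, with the natural (maximal) domain
`{x ∈ dom f : f x ∈ dom g}`. -/
def LinearPMap.pComp (g f : H →ₗ.[ℂ] H) : H →ₗ.[ℂ] H where
  domain := (g.domain.comap f.toFun).map f.domain.subtype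
  toFun := g.toFun ∘ₗ (f.toFun.restrict (p := g.domain.comap f.toFun) (q := g.domain)
      (fun _ hx => hx)) ∘ₗ
    ((Submodule.equivMapOfInjective f.domain.subtype (Submodule.injective_subtype _)
      (g.domain.comap f.toFun)).symm).toLinearMap

/-- `n`-th power of an unbounded operator; `T^0` is the identity on all of `H`. -/
def LinearPMap.pPow (T : H →ₗ.[ℂ] H) : ℕ → (H →ₗ.[ℂ] H)
  | 0 => (LinearMap.id : H →ₗ[ℂ] H).toPMap ⊤
  | n + 1 => T.pComp (T.pPow n)

theorem LinearPMap.pPow_domain_succ_le (T : H →ₗ.[ℂ] H) (n : ℕ) :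
    (T.pPow (n + 1)).domain ≤ (T.pPow n).domain := by
  intro x hx
  simp_rw [pPow, pComp] at hx
  obtain ⟨y, -, rfl⟩ := hx
  exact y.2

theorem LinearPMap.pPow_domain_le (T : H →ₗ.[ℂ] H) {i n : ℕ} (h : i ≤ n) :
    (T.pPow n).domain ≤ (T.pPow i).domain := by
  induction n with
  | zero => exact Nat.le_zero.mp h ▸ le_rfl
  | succ n ih =>
    rcases Nat.lt_succ_iff_lt_or_eq.mp (Nat.lt_succ_of_le h) with h' | rfl
    · exact le_trans (T.pPow_domain_succ_le n) (ih (Nat.lt_succ_iff.mp h'))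
    · exact le_rfl

/-- `p(T)` for a complex polynomial `p`, defined on `D(T^n)` where `n = deg p`. -/
def LinearPMap.polyApp (p : Polynomial ℂ) (T : H →ₗ.[ℂ] H) : H →ₗ.[ℂ] H where
  domain := (T.pPow p.natDegree).domain
  toFun := ∑ i ∈ (Finset.range (p.natDegree + 1)).attach,
    p.coeff i.1 • ((T.pPow i.1).toFun ∘ₗ Submodule.inclusion
      (T.pPow_domain_le (Nat.lt_succ_iff.mp (Finset.mem_range.mp i.2))))

/-- `A - μ • I` with domain `dom A`. -/
def LinearPMap.subConst (A : H →ₗ.[ℂ] H) (μ : ℂ) : H →ₗ.[ℂ] H :=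
  ⟨A.domain, A.toFun - μ • A.domain.subtype⟩

/-- An unbounded operator is boundedly invertible if it is bijective from its domain onto `H`
with an everywhere-defined bounded (continuous) inverse. -/
def LinearPMap.IsBddInvertible (A : H →ₗ.[ℂ] H) : Prop :=
  ∃ B : H →L[ℂ] H, (∀ y : H, ∃ hy : B y ∈ A.domain, A ⟨B y, hy⟩ = y) ∧
    ∀ x : A.domain, B (A x) = (x : H)

/-- The spectrum of an unbounded operator: `μ ∉ σ(A)` iff `A - μI` is bijective with a
bounded everywhere-defined inverse. -/
def LinearPMap.pSpectrum (A : H →ₗ.[ℂ] H) : Set ℂ :=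
  {μ | ¬ (A.subConst μ).IsBddInvertible}

/-- The kernel of an unbounded operator, as a subset of `H`. -/
def LinearPMap.pKer (A : H →ₗ.[ℂ] H) : Set H :=
  {x | ∃ hx : x ∈ A.domain, A ⟨x, hx⟩ = 0}

/-- The range of an unbounded operator. -/
def LinearPMap.pRan (A : H →ₗ.[ℂ] H) : Set H :=
  Set.range fun x : A.domain => A x

/-- A bounded everywhere-defined operator seen as an unbounded operator. -/
def ContinuousLinearMap.toPMapTop (B : H →L[ℂ] H) : H →ₗ.[ℂ] H :=
  (B : H →ₗ[ℂ] H).toPMap ⊤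

end BanachDefs

section HilbertDefs

variable {H : Type*} [NormedAddCommGroup H] [InnerProductSpace ℂ H] [CompleteSpace H]

/-- A densely defined closed operator is quasinormal if `T T* T = T* T T`. -/
def LinearPMap.IsQuasinormal (T : H →ₗ.[ℂ] H) : Prop :=
  T.IsClosed ∧ Dense (T.domain : Set H) ∧
    T.pComp (T.adjoint.pComp T) = T.adjoint.pComp (T.pComp T)

/-- A densely defined closed operator is normal if `T* T = T T*` (an equality of unbounded
operators, domains included). -/
def LinearPMap.IsNormal (T : H →ₗ.[ℂ] H) : Prop :=
  T.IsClosed ∧ Dense (T.domain : Set H) ∧ T.adjoint.pComp T = T.pComp T.adjoint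

/-- A symmetric (not necessarily densely defined) operator. -/
def LinearPMap.IsSymm (T : H →ₗ.[ℂ] H) : Prop :=
  ∀ x y : T.domain, inner ℂ (T x) (y : H) = (inner ℂ (x : H) (T y) : ℂ)

/-- A paranormal operator: `‖Tx‖² ≤ ‖T²x‖ ‖x‖` for every `x ∈ D(T²)`. -/
def LinearPMap.IsParanormal (T : H →ₗ.[ℂ] H) : Prop :=
  ∀ (x : H) (hx : x ∈ T.domain) (hTx : T ⟨x, hx⟩ ∈ T.domain),
    ‖T ⟨x, hx⟩‖ ^ 2 ≤ ‖T ⟨T ⟨x, hx⟩, hTx⟩‖ * ‖x‖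

end HilbertDefs

end

section Helpers

open LinearPMap

variable {H : Type*} [NormedAddCommGroup H] [InnerProductSpace ℂ H] [CompleteSpace H]

private theorem pmap_congr {F G : H →ₗ.[ℂ] H} (h : F = G) {x : H} (hx : x ∈ F.domain)
    (hx' : x ∈ G.domain) : F ⟨x, hx⟩ = G ⟨x, hx'⟩ := by subst h; rfl

private theorem pComp_mem (g f : H →ₗ.[ℂ] H) {x : H} (hx : x ∈ f.domain)
    (hfx : f ⟨x, hx⟩ ∈ g.domain) : x ∈ (g.pComp f).domain :=
  Submodule.mem_map.2 ⟨⟨x, hx⟩, Submodule.mem_comap.2 hfx, rfl⟩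

private theorem pComp_mem_elim (g f : H →ₗ.[ℂ] H) {x : H} (hx : x ∈ (g.pComp f).domain) :
    ∃ h1 : x ∈ f.domain, f ⟨x, h1⟩ ∈ g.domain := by
  obtain ⟨y, hy, rfl⟩ := Submodule.mem_map.1 hx
  exact ⟨y.2, hy⟩

private theorem pComp_apply (g f : H →ₗ.[ℂ] H) {x : H} (h1 : x ∈ f.domain)
    (h2 : f ⟨x, h1⟩ ∈ g.domain) (hx : x ∈ (g.pComp f).domain) :
    (g.pComp f) ⟨x, hx⟩ = g ⟨f ⟨x, h1⟩, h2⟩ := by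
  have hsymm : (Submodule.equivMapOfInjective f.domain.subtype (Submodule.injective_subtype _)
      (g.domain.comap f.toFun)).symm ⟨x, hx⟩ = ⟨⟨x, h1⟩, Submodule.mem_comap.2 h2⟩ := by
    rw [LinearEquiv.symm_apply_eq]
    apply Subtype.ext
    rw [Submodule.coe_equivMapOfInjective_apply]
    rfl
  show (g.toFun ∘ₗ _ ∘ₗ _) _ = _
  exact (congrArg (fun z => g.toFun ((f.toFun.restrict fun _ h => h) z)) hsymm).trans rfl

private theorem subConst_apply (A : H →ₗ.[ℂ] H) (μ : ℂ) {x : H} (hx : x ∈ A.domain) :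
    (A.subConst μ) ⟨x, hx⟩ = A ⟨x, hx⟩ - μ • x := rfl

end Helpers

section Helpers2

open LinearPMap ContinuousLinearMap

variable {H : Type*} [NormedAddCommGroup H] [InnerProductSpace ℂ H] [CompleteSpace H]

local notation "⟪" x ", " y "⟫" => @inner ℂ _ _ x y

/-- `R` is an everywhere-defined bounded two-sided inverse of `A - c`. -/
private def IsResG (A : H →ₗ.[ℂ] H) (c : ℂ) (R : H →L[ℂ] H) : Prop :=
  (∀ y : H, ∃ hy : R y ∈ A.domain, A ⟨R y, hy⟩ = y + c • R y) ∧
  ∀ (x : H) (hx : x ∈ A.domain), R (A ⟨x, hx⟩ - c • x) = x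

private theorem res_inj {A : H →ₗ.[ℂ] H} {c : ℂ} {R : H →L[ℂ] H} (hres : IsResG A c R)
    {x : H} (h0 : R x = 0) : x = 0 := by
  obtain ⟨hy, hval⟩ := hres.1 x
  have hz : A ⟨R x, hy⟩ = (0 : H) := by
    have h1 : (⟨R x, hy⟩ : A.domain) = 0 := Subtype.ext h0
    rw [h1, LinearPMap.map_zero]
  have h2 := hz.symm.trans hval
  rw [h0, smul_zero, add_zero] at h2
  exact h2.symm

private theorem sym_of_sa {A : H →ₗ.[ℂ] H} (hd : Dense (A.domain : Set H))
    (hsa : A.adjoint = A) : ∀ x y : A.domain, ⟪A x, (y : H)⟫ = ⟪(x : H), A y⟫ := by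
  have h := LinearPMap.adjoint_isFormalAdjoint hd (T := A)
  rw [hsa] at h
  exact h

private theorem res_apply {A : H →ₗ.[ℂ] H} {c : ℂ} {R : H →L[ℂ] H} (hres : IsResG A c R)
    (x : A.domain) : R (A x) = (x : H) + c • R x := by
  have h2 := hres.2 x x.2
  have : R (A ⟨(x : H), x.2⟩) - c • R (x : H) = (x : H) := by
    rw [← _root_.map_smul, ← _root_.map_sub]; exact h2
  rw [sub_eq_iff_eq_add] at this
  simpa using this

private theorem res_adjoint {A : H →ₗ.[ℂ] H} (hd : Dense (A.domain : Set H))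
    (hsa : A.adjoint = A) {c : ℂ} {R : H →L[ℂ] H} (hres : IsResG A c R) :
    IsResG A ((starRingEnd ℂ) c) (adjoint R) := by
  have hsym := sym_of_sa hd hsa
  constructor
  · intro y
    have key : ∀ x : A.domain,
        ⟪y + (starRingEnd ℂ c) • adjoint R y, (x : H)⟫ = ⟪adjoint R y, A x⟫ := by
      intro x
      rw [adjoint_inner_left, res_apply hres x, inner_add_right, inner_smul_right,
        inner_add_left, inner_smul_left, ← adjoint_inner_left (A := R)]
      simp
    have hmem' : adjoint R y ∈ A.adjoint.domain :=
      LinearPMap.mem_adjoint_domain_of_exists _ ⟨_, key⟩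
    have hval' : A.adjoint ⟨adjoint R y, hmem'⟩ = y + (starRingEnd ℂ c) • adjoint R y :=
      LinearPMap.adjoint_apply_eq hd _ key
    exact ⟨hsa ▸ hmem', (pmap_congr hsa.symm (hsa ▸ hmem') hmem').trans hval'⟩
  · intro x hx
    apply ext_inner_right ℂ
    intro g
    obtain ⟨hg, hgval⟩ := hres.1 g
    rw [adjoint_inner_left, inner_sub_left, inner_smul_left]
    have h1 : ⟪A ⟨x, hx⟩, R g⟫ = ⟪x, (g : H) + c • R g⟫ := by
      have := hsym ⟨x, hx⟩ ⟨R g, hg⟩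
      rw [hgval] at this
      exact this
    rw [h1, inner_add_right, inner_smul_right]
    simp

private theorem res_comm {A : H →ₗ.[ℂ] H} {c : ℂ} {R : H →L[ℂ] H} (hres : IsResG A c R)
    {S : H →L[ℂ] H}
    (hpc : ∀ (y : H) (hy : y ∈ A.domain), ∃ h' : S y ∈ A.domain, A ⟨S y, h'⟩ = S (A ⟨y, hy⟩)) :
    ∀ h : H, S (R h) = R (S h) := by
  intro h
  obtain ⟨hy, hval⟩ := hres.1 h
  obtain ⟨h', hval'⟩ := hpc (R h) hy
  have h2 := hres.2 (S (R h)) h'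
  rw [hval', hval, _root_.map_add, _root_.map_smul] at h2
  exact (by simpa using h2 : R (S h) = S (R h)).symm

private theorem comm_adjoint {S R : H →L[ℂ] H} (h : ∀ y, S (adjoint R y) = adjoint R (S y)) :
    ∀ y, adjoint S (R y) = R (adjoint S y) := by
  have h1 : S ∘L adjoint R = adjoint R ∘L S := ContinuousLinearMap.ext h
  have h2 := congrArg ContinuousLinearMap.adjoint h1
  rw [adjoint_comp, adjoint_comp, adjoint_adjoint] at h2
  exact fun y => (congrFun (congrArg DFunLike.coe h2) y).symm

private theorem comm_adjoint2 {S R : H →L[ℂ] H} (h : ∀ y, S (R y) = R (S y)) :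
    ∀ y, adjoint S (adjoint R y) = adjoint R (adjoint S y) := by
  have h1 : S ∘L R = R ∘L S := ContinuousLinearMap.ext h
  have h2 := congrArg ContinuousLinearMap.adjoint h1
  rw [adjoint_comp, adjoint_comp] at h2
  exact fun y => (congrFun (congrArg DFunLike.coe h2) y).symm

private theorem inner_zero_of_dense {D : Submodule ℂ H} (hd : Dense (D : Set H)) {z : H}
    (h : ∀ x ∈ D, ⟪z, x⟫ = 0) : z = 0 := by
  have hcl : IsClosed {x : H | ⟪z, x⟫ = 0} :=
    isClosed_eq (innerSL ℂ z).continuous continuous_const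
  have hsub : (D : Set H) ⊆ {x : H | ⟪z, x⟫ = 0} := fun x hx => h x hx
  have : ∀ x : H, ⟪z, x⟫ = 0 := by
    intro x
    have := hcl.closure_subset_iff.2 hsub (hd x)
    exact this
  have := this z
  rwa [inner_self_eq_zero] at this

private theorem inner_zero_of_dense' {D : Submodule ℂ H} (hd : Dense (D : Set H)) {z : H}
    (h : ∀ x ∈ D, ⟪x, z⟫ = 0) : z = 0 := by
  apply inner_zero_of_dense hd
  intro x hx
  rw [← inner_conj_symm, h x hx, _root_.map_zero]

private theorem dense_of_inner {K : Submodule ℂ H} (h : ∀ w : H, (∀ x ∈ K, ⟪x, w⟫ = 0) → w = 0) :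
    Dense (K : Set H) := by
  rw [Submodule.dense_iff_topologicalClosure_eq_top, Submodule.topologicalClosure_eq_top_iff]
  rw [Submodule.eq_bot_iff]
  intro w hw
  exact h w fun x hx => (Submodule.mem_orthogonal K w).1 hw x hx

end Helpers2

/-- if `A`, `B` are self-adjoint, `AB = BA` (equality of unbounded operators,
domains included) and `σ(AB) ≠ ℂ`, then `A` and `B` strongly commute.  Strong commutation
(commutation of all spectral projections) is expressed through the standard equivalent
formulation that the bounded resolvents `(A - i)⁻¹` and `(B - i)⁻¹` commute. -/
theorem statement_4 {H : Type*} [NormedAddCommGroup H] [InnerProductSpace ℂ H] [CompleteSpace H]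
    (A B : H →ₗ.[ℂ] H)
    (hdA : Dense (A.domain : Set H)) (hdB : Dense (B.domain : Set H))
    (hsaA : A.adjoint = A) (hsaB : B.adjoint = B)
    (hcomm : A.pComp B = B.pComp A)
    (hspec : (A.pComp B).pSpectrum ≠ Set.univ) :
    ∀ RA RB : H →L[ℂ] H,
      ((∀ y : H, ∃ hy : RA y ∈ (A.subConst Complex.I).domain,
          (A.subConst Complex.I) ⟨RA y, hy⟩ = y) ∧
        ∀ x : (A.subConst Complex.I).domain, RA ((A.subConst Complex.I) x) = (x : H)) →
      ((∀ y : H, ∃ hy : RB y ∈ (B.subConst Complex.I).domain,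
          (B.subConst Complex.I) ⟨RB y, hy⟩ = y) ∧
        ∀ x : (B.subConst Complex.I).domain, RB ((B.subConst Complex.I) x) = (x : H)) →
      Commute RA RB := by
  intro RA RB hRA hRB
  set T := A.pComp B with hTdef
  -- obtain a point μ outside the spectrum and the bounded inverse S of T - μ
  obtain ⟨μ, hμ⟩ : ∃ μ : ℂ, (T.subConst μ).IsBddInvertible := by
    obtain ⟨μ, hμ⟩ := Set.ne_univ_iff_exists_notMem _ |>.1 hspec
    exact ⟨μ, not_not.1 hμ⟩
  obtain ⟨S, hS1, hS2⟩ := hμ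
  have hdom : T.domain = (B.pComp A).domain := congrArg LinearPMap.domain hcomm
  -- inverse properties of S in convenient form
  have hS1' : ∀ y : H, ∃ hy : S y ∈ T.domain, T ⟨S y, hy⟩ = y + μ • S y := by
    intro y
    obtain ⟨hy, hv⟩ := hS1 y
    refine ⟨hy, ?_⟩
    have hv' : T ⟨S y, hy⟩ - μ • S y = y := hv
    rw [sub_eq_iff_eq_add] at hv'
    exact hv'
  have hS2' : ∀ (x : H) (hx : x ∈ T.domain), S (T ⟨x, hx⟩ - μ • x) = x := fun x hx =>
    hS2 ⟨x, hx⟩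
  -- the two factorizations of T
  have hT_AB : ∀ (x : H) (hx : x ∈ T.domain), ∃ (h1 : x ∈ B.domain)
      (h2 : B ⟨x, h1⟩ ∈ A.domain), T ⟨x, hx⟩ = A ⟨B ⟨x, h1⟩, h2⟩ := by
    intro x hx
    obtain ⟨h1, h2⟩ := pComp_mem_elim A B hx
    exact ⟨h1, h2, pComp_apply A B h1 h2 hx⟩
  have hT_BA : ∀ (x : H) (hx : x ∈ T.domain), ∃ (h1 : x ∈ A.domain)
      (h2 : A ⟨x, h1⟩ ∈ B.domain), T ⟨x, hx⟩ = B ⟨A ⟨x, h1⟩, h2⟩ := by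
    intro x hx
    have hx' : x ∈ (B.pComp A).domain := hdom ▸ hx
    obtain ⟨h1, h2⟩ := pComp_mem_elim B A hx'
    exact ⟨h1, h2, (pmap_congr hcomm hx hx').trans (pComp_apply B A h1 h2 hx')⟩
  -- S commutes with A pointwise
  have hSA : ∀ (y : H) (hy : y ∈ A.domain),
      ∃ h' : S y ∈ A.domain, A ⟨S y, h'⟩ = S (A ⟨y, hy⟩) := by
    intro y hy
    obtain ⟨hz, hTz⟩ := hS1' y
    obtain ⟨hzA, hAz, hTzval⟩ := hT_BA (S y) hz
    refine ⟨hzA, ?_⟩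
    have hBw : B ⟨A ⟨S y, hzA⟩, hAz⟩ = y + μ • S y := hTzval.symm.trans hTz
    have hyz : y + μ • S y ∈ A.domain := A.domain.add_mem hy (A.domain.smul_mem μ hzA)
    have hwT2 : A ⟨S y, hzA⟩ ∈ T.domain := pComp_mem A B hAz (hBw ▸ hyz)
    obtain ⟨hwB', hBwA, hTw⟩ := hT_AB (A ⟨S y, hzA⟩) hwT2
    have e1 : (⟨B ⟨A ⟨S y, hzA⟩, hwB'⟩, hBwA⟩ : A.domain) = ⟨y, hy⟩ + μ • ⟨S y, hzA⟩ := by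
      apply Subtype.ext
      show B ⟨A ⟨S y, hzA⟩, hwB'⟩ = _
      rw [hBw]
      simp
    have hTwval : T ⟨A ⟨S y, hzA⟩, hwT2⟩ = A ⟨y, hy⟩ + μ • A ⟨S y, hzA⟩ := by
      rw [hTw, e1, LinearPMap.map_add, LinearPMap.map_smul]
    have hfin := hS2' (A ⟨S y, hzA⟩) hwT2
    rw [hTwval] at hfin
    rw [add_sub_cancel_right] at hfin
    exact hfin.symm
  have hSB : ∀ (y : H) (hy : y ∈ B.domain),
      ∃ h' : S y ∈ B.domain, B ⟨S y, h'⟩ = S (B ⟨y, hy⟩) := by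
    intro y hy
    obtain ⟨hz, hTz⟩ := hS1' y
    obtain ⟨hzB, hBz, hTzval⟩ := hT_AB (S y) hz
    refine ⟨hzB, ?_⟩
    have hAw : A ⟨B ⟨S y, hzB⟩, hBz⟩ = y + μ • S y := hTzval.symm.trans hTz
    have hyz : y + μ • S y ∈ B.domain := B.domain.add_mem hy (B.domain.smul_mem μ hzB)
    have hwT' : B ⟨S y, hzB⟩ ∈ (B.pComp A).domain := pComp_mem B A hBz (hAw ▸ hyz)
    have hwT2 : B ⟨S y, hzB⟩ ∈ T.domain := hdom ▸ hwT'
    obtain ⟨hwA', hAwB, hTw⟩ := hT_BA (B ⟨S y, hzB⟩) hwT2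
    have e1 : (⟨A ⟨B ⟨S y, hzB⟩, hwA'⟩, hAwB⟩ : B.domain) = ⟨y, hy⟩ + μ • ⟨S y, hzB⟩ := by
      apply Subtype.ext
      show A ⟨B ⟨S y, hzB⟩, hwA'⟩ = _
      rw [hAw]
      simp
    have hTwval : T ⟨B ⟨S y, hzB⟩, hwT2⟩ = B ⟨y, hy⟩ + μ • B ⟨S y, hzB⟩ := by
      rw [hTw, e1, LinearPMap.map_add, LinearPMap.map_smul]
    have hfin := hS2' (B ⟨S y, hzB⟩) hwT2
    rw [hTwval, add_sub_cancel_right] at hfin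
    exact hfin.symm
  -- resolvent instances
  have hresA : IsResG A Complex.I RA := by
    refine ⟨fun y => ?_, fun x hx => hRA.2 ⟨x, hx⟩⟩
    obtain ⟨hy, hv⟩ := hRA.1 y
    refine ⟨hy, ?_⟩
    have hv' : A ⟨RA y, hy⟩ - Complex.I • RA y = y := hv
    rw [sub_eq_iff_eq_add] at hv'
    exact hv'
  have hresB : IsResG B Complex.I RB := by
    refine ⟨fun y => ?_, fun x hx => hRB.2 ⟨x, hx⟩⟩
    obtain ⟨hy, hv⟩ := hRB.1 y
    refine ⟨hy, ?_⟩
    have hv' : B ⟨RB y, hy⟩ - Complex.I • RB y = y := hv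
    rw [sub_eq_iff_eq_add] at hv'
    exact hv'
  have hresA' := res_adjoint hdA hsaA hresA
  have hresB' := res_adjoint hdB hsaB hresB
  set RA' := ContinuousLinearMap.adjoint RA with hRA'def
  set RB' := ContinuousLinearMap.adjoint RB with hRB'def
  have symA := sym_of_sa hdA hsaA
  have symB := sym_of_sa hdB hsaB
  have c1 : ∀ h, S (RA h) = RA (S h) := res_comm hresA hSA
  have c2 : ∀ h, S (RA' h) = RA' (S h) := res_comm hresA' hSA
  have c3 : ∀ h, S (RB h) = RB (S h) := res_comm hresB hSB
  have c4 : ∀ h, S (RB' h) = RB' (S h) := res_comm hresB' hSB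
  have d1 : ∀ h, ContinuousLinearMap.adjoint S (RA h) = RA (ContinuousLinearMap.adjoint S h) :=
    comm_adjoint c2
  have d2 : ∀ h, ContinuousLinearMap.adjoint S (RA' h) = RA' (ContinuousLinearMap.adjoint S h) :=
    comm_adjoint2 c1
  have d3 : ∀ h, ContinuousLinearMap.adjoint S (RB h) = RB (ContinuousLinearMap.adjoint S h) :=
    comm_adjoint c4
  have d4 : ∀ h, ContinuousLinearMap.adjoint S (RB' h) = RB' (ContinuousLinearMap.adjoint S h) :=
    comm_adjoint2 c3
  -- density of D(T)
  have hTdense : Dense (T.domain : Set H) := by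
    apply dense_of_inner
    intro w hw
    have hS'w : ContinuousLinearMap.adjoint S w = 0 := by
      have h0 : ∀ h : H, (inner ℂ h (ContinuousLinearMap.adjoint S w) : ℂ) = 0 := by
        intro h
        rw [ContinuousLinearMap.adjoint_inner_right]
        obtain ⟨hm, -⟩ := hS1' h
        exact hw (S h) hm
      exact inner_self_eq_zero.1 (h0 (ContinuousLinearMap.adjoint S w))
    obtain ⟨huA, huval⟩ := hresA.1 (RA' (RB (RB' w)))
    have hS'u : ContinuousLinearMap.adjoint S (RA (RA' (RB (RB' w)))) = 0 := by
      rw [d1, d2, d3, d4, hS'w]; simp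
    have hS'z : ContinuousLinearMap.adjoint S (RA' (RB (RB' w))) = 0 := by
      rw [d2, d3, d4, hS'w]; simp
    have key : ∀ h ∈ B.domain, (inner ℂ (RA (RA' (RB (RB' w)))) h : ℂ) = 0 := by
      intro h hh
      obtain ⟨hxT, hTx⟩ := hS1' h
      obtain ⟨hxB, hBxA, hTxAB⟩ := hT_AB (S h) hxT
      have hu_Sh : (inner ℂ (RA (RA' (RB (RB' w)))) (S h) : ℂ) = 0 := by
        rw [← ContinuousLinearMap.adjoint_inner_left, hS'u, inner_zero_left]
      have hstep : (inner ℂ (RA (RA' (RB (RB' w)))) (T ⟨S h, hxT⟩) : ℂ)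
          = inner ℂ (RA (RA' (RB (RB' w)))) h := by
        rw [hTx, inner_add_right, inner_smul_right, hu_Sh, mul_zero, add_zero]
      obtain ⟨hmB, hBSh⟩ := hSB h hh
      have hstep2 : (inner ℂ (RA (RA' (RB (RB' w)))) (T ⟨S h, hxT⟩) : ℂ) = 0 := by
        rw [hTxAB, ← symA ⟨RA (RA' (RB (RB' w))), huA⟩ ⟨B ⟨S h, hxB⟩, hBxA⟩]
        show (inner ℂ (A ⟨RA (RA' (RB (RB' w))), huA⟩) (B ⟨S h, hxB⟩) : ℂ) = 0
        rw [hBSh, ← ContinuousLinearMap.adjoint_inner_left, huval, _root_.map_add,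
          _root_.map_smul, hS'u, hS'z, smul_zero, add_zero, inner_zero_left]
      exact hstep.symm.trans hstep2
    have hu0 : RA (RA' (RB (RB' w))) = 0 := inner_zero_of_dense hdB key
    exact res_inj hresB' (res_inj hresB (res_inj hresA' (res_inj hresA hu0)))
  -- the perp of (A - i)D(T) is trivial
  have hMperp : ∀ z : H, (∀ (x : H) (hx : x ∈ T.domain) (hxA : x ∈ A.domain),
      (inner ℂ z (A ⟨x, hxA⟩ - Complex.I • x) : ℂ) = 0) → z = 0 := by
    intro z hz
    have hRAz : ∀ y ∈ T.domain, (inner ℂ (RA z) y : ℂ) = 0 := by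
      intro y hyT
      obtain ⟨hm, hval⟩ := hresA.1 (RA' y)
      have hxT : RA (RA' y) ∈ T.domain := by
        obtain ⟨hmem, -⟩ := hS1' (RA (RA' (T ⟨y, hyT⟩ - μ • y)))
        have heq : RA (RA' y) = S (RA (RA' (T ⟨y, hyT⟩ - μ • y))) := by
          rw [c1, c2, hS2' y hyT]
        rw [heq]; exact hmem
      have h1 := hz (RA (RA' y)) hxT hm
      rw [hval, add_sub_cancel_right, hRA'def,
        ContinuousLinearMap.adjoint_inner_right] at h1
      exact h1
    exact res_inj hresA (inner_zero_of_dense hTdense hRAz)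
  -- RA RB and RB RA agree on (A - i)D(T)
  have hEzero : ∀ (x : H) (hx : x ∈ T.domain) (hxA : x ∈ A.domain),
      RA (RB (A ⟨x, hxA⟩ - Complex.I • x)) = RB (RA (A ⟨x, hxA⟩ - Complex.I • x)) := by
    intro x hx hxA
    have hSh : S (T ⟨x, hx⟩ - μ • x) = x := hS2' x hx
    obtain ⟨hRBmem, hRBval⟩ := hresB.1 (T ⟨x, hx⟩ - μ • x)
    obtain ⟨hx2T, -⟩ := hS1' (RB (T ⟨x, hx⟩ - μ • x))
    obtain ⟨h1, h2, hvalAB⟩ := hT_AB (S (RB (T ⟨x, hx⟩ - μ • x))) hx2T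
    obtain ⟨g1, g2, hvalBA⟩ := hT_BA (S (RB (T ⟨x, hx⟩ - μ • x))) hx2T
    obtain ⟨hmemS, hcommS⟩ := hSB (RB (T ⟨x, hx⟩ - μ • x)) hRBmem
    set u := S (RB (T ⟨x, hx⟩ - μ • x)) with hu
    have eB : B ⟨u, h1⟩ - Complex.I • u = x := by
      rw [show B ⟨u, h1⟩ = S (B ⟨RB (T ⟨x, hx⟩ - μ • x), hRBmem⟩) from hcommS, hRBval,
        _root_.map_add, _root_.map_smul, hSh, add_sub_cancel_right]
    have hres1 : RA (A ⟨x, hxA⟩ - Complex.I • x) = x := hresA.2 x hxA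
    have hres2 : RB x = u := by
      have h0 := hresB.2 u h1
      rw [eB] at h0
      exact h0
    have hqB : A ⟨u, g1⟩ - Complex.I • u ∈ B.domain :=
      B.domain.sub_mem g2 (B.domain.smul_mem _ h1)
    have hm_eq : A ⟨x, hxA⟩ - Complex.I • x
        = B ⟨A ⟨u, g1⟩ - Complex.I • u, hqB⟩ - Complex.I • (A ⟨u, g1⟩ - Complex.I • u) := by
      have e2 : (⟨x, hxA⟩ : A.domain) = ⟨B ⟨u, h1⟩, h2⟩ - Complex.I • ⟨u, g1⟩ := by
        apply Subtype.ext
        show x = B ⟨u, h1⟩ - Complex.I • u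
        exact eB.symm
      have e3 : (⟨A ⟨u, g1⟩ - Complex.I • u, hqB⟩ : B.domain)
          = ⟨A ⟨u, g1⟩, g2⟩ - Complex.I • ⟨u, h1⟩ := by
        apply Subtype.ext
        show A ⟨u, g1⟩ - Complex.I • u = A ⟨u, g1⟩ - Complex.I • u
        rfl
      have heq2 : Complex.I • x = Complex.I • B ⟨u, h1⟩ - (Complex.I * Complex.I) • u := by
        rw [← eB, smul_sub, smul_smul]
      rw [e2, e3, LinearPMap.map_sub, LinearPMap.map_sub, LinearPMap.map_smul,
        LinearPMap.map_smul, ← hvalAB, ← hvalBA, heq2]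
      simp only [smul_sub, smul_smul]
      abel
    have hres3 : RB (A ⟨x, hxA⟩ - Complex.I • x) = A ⟨u, g1⟩ - Complex.I • u := by
      rw [hm_eq]
      exact hresB.2 _ hqB
    have hres4 : RA (A ⟨u, g1⟩ - Complex.I • u) = u := hresA.2 u g1
    rw [hres1, hres2, hres3, hres4]
  -- conclude
  have hE : ∀ v, RA (RB v) = RB (RA v) := by
    have hEadj : ∀ g : H, ContinuousLinearMap.adjoint (RA ∘L RB - RB ∘L RA) g = 0 := by
      intro g
      apply hMperp
      intro x hx hxA
      rw [ContinuousLinearMap.adjoint_inner_left]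
      have h0 : (RA ∘L RB - RB ∘L RA) (A ⟨x, hxA⟩ - Complex.I • x) = 0 := by
        rw [ContinuousLinearMap.sub_apply, ContinuousLinearMap.comp_apply,
          ContinuousLinearMap.comp_apply, hEzero x hx hxA, sub_self]
      rw [h0, inner_zero_right]
    intro v
    have h1 : ∀ w : H, (inner ℂ w ((RA ∘L RB - RB ∘L RA) v) : ℂ) = 0 := by
      intro w
      rw [← ContinuousLinearMap.adjoint_inner_left, hEadj, inner_zero_left]
    have h2 := inner_self_eq_zero.1 (h1 _)
    have h3 : RA (RB v) - RB (RA v) = 0 := by simpa using h2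
    exact sub_eq_zero.1 h3
  show RA * RB = RB * RA
  ext v
  rw [ContinuousLinearMap.mul_apply, ContinuousLinearMap.mul_apply, hE v]
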